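/- For the Chebyshev-associated orthonormal polynomials P^T_n (P^T_0 = 1, P^T_n(ω) = √2 · T_n(ω/π) for n > 0), and any 0 < ω < π: (1/(n+1)) Σ_{k=0}^{n} P^T_k(ω)² = (1+2n)/(2n+2) + sin((2n+1) arccos(ω/π)) / ((2n+2)√(1−(ω/π)²)), hence this average converges to 1 as n → ∞. -/
import Mathlib

open Filter Real

/-- The rescaled orthonormal Chebyshev polynomials: `P^T_0 = 1`,
`P^T_n(ω) = √2 T_n(ω/π)` for `n > 0`. -/
noncomputable def chebP (n : ℕ) (ω : ℝ) : ℝ :=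
  if n = 0 then 1
  else Real.sqrt 2 * (Polynomial.Chebyshev.T ℝ (n : ℤ)).eval (ω / Real.pi)

lemma sum_cos_key (θ : ℝ) (n : ℕ) :
    (∑ k ∈ Finset.range (n + 1), Real.cos (2 * k * θ)) * (2 * Real.sin θ)
      = Real.sin ((2 * n + 1) * θ) + Real.sin θ := by
  induction n with
  | zero => simp; ring
  | succ n ih =>
    rw [Finset.sum_range_succ, add_mul, ih]
    have h : Real.sin ((2 * (n + 1 : ℕ) + 1) * θ) - Real.sin ((2 * n + 1) * θ)
        = 2 * Real.sin θ * Real.cos (2 * (n + 1 : ℕ) * θ) := by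
      rw [Real.sin_sub_sin]
      push_cast
      ring_nf
    push_cast at h ⊢
    linarith [h]

/-- For any `0 < ω < π`,
`(1/(n+1)) Σ_{k=0}^{n} P^T_k(ω)² = (1+2n)/(2n+2)
  + sin((2n+1) arccos(ω/π)) / ((2n+2)√(1−(ω/π)²))`,
hence this average converges to `1` as `n → ∞`. -/
theorem chebP_sum_sq_avg (ω : ℝ) (hω0 : 0 < ω) (hωπ : ω < Real.pi) :
    (∀ n : ℕ,
      (1 / ((n : ℝ) + 1)) * ∑ k ∈ Finset.range (n + 1), chebP k ω ^ 2 =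
        (1 + 2 * (n : ℝ)) / (2 * n + 2) +
          Real.sin ((2 * (n : ℝ) + 1) * Real.arccos (ω / Real.pi)) /
            ((2 * (n : ℝ) + 2) * Real.sqrt (1 - (ω / Real.pi) ^ 2))) ∧
    Tendsto
      (fun n : ℕ =>
        (1 / ((n : ℝ) + 1)) * ∑ k ∈ Finset.range (n + 1), chebP k ω ^ 2)
      atTop (nhds 1) := by
  have hπ : (0 : ℝ) < Real.pi := Real.pi_pos
  set x := ω / Real.pi with hx
  have hx1 : -1 < x := by
    have : (0:ℝ) < x := div_pos hω0 hπ
    linarith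
  have hx2 : x < 1 := (div_lt_one hπ).mpr hωπ
  set θ := Real.arccos x with hθ
  have hcos : Real.cos θ = x := Real.cos_arccos hx1.le hx2.le
  have hsin : Real.sin θ = Real.sqrt (1 - x ^ 2) := by rw [hθ]; exact Real.sin_arccos x
  have hsinpos : 0 < Real.sin θ := by
    rw [hsin]
    apply Real.sqrt_pos.mpr
    nlinarith
  have hsum : ∀ n : ℕ, (∑ k ∈ Finset.range (n + 1), chebP k ω ^ 2)
      = (n : ℝ) + 1 / 2 + Real.sin ((2 * n + 1) * θ) / (2 * Real.sin θ) := by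
    intro n
    have hterm : ∀ k : ℕ, chebP k ω ^ 2 = 1 + Real.cos (2 * k * θ)
        - (if k = 0 then 1 else 0) := by
      intro k
      rcases Nat.eq_zero_or_pos k with hk | hk
      · simp [chebP, hk]
      · have : chebP k ω = Real.sqrt 2 * Real.cos (k * θ) := by
          rw [chebP, if_neg hk.ne', ← hx, ← hcos, Polynomial.Chebyshev.T_real_cos]
          push_cast; ring_nf
        rw [this, if_neg hk.ne']
        have h2 : Real.sqrt 2 ^ 2 = 2 := Real.sq_sqrt (by norm_num)
        have hc : Real.cos (2 * k * θ) = 2 * Real.cos (k * θ) ^ 2 - 1 := by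
          rw [show (2:ℝ) * k * θ = 2 * (k * θ) by ring, Real.cos_two_mul]
        rw [mul_pow, h2, hc]; ring
    rw [Finset.sum_congr rfl fun k _ => hterm k]
    rw [Finset.sum_sub_distrib, Finset.sum_add_distrib]
    have h1 : (∑ k ∈ Finset.range (n + 1), (if k = 0 then (1:ℝ) else 0)) = 1 := by
      simp [Finset.sum_ite_eq' (Finset.range (n+1)) 0]
    have h2 : (∑ k ∈ Finset.range (n + 1), Real.cos (2 * k * θ))
        = (Real.sin ((2 * n + 1) * θ) + Real.sin θ) / (2 * Real.sin θ) := by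
      rw [eq_div_iff (by positivity)]
      exact sum_cos_key θ n
    rw [h1, h2, Finset.sum_const, Finset.card_range]
    field_simp
    ring
  have hmain : ∀ n : ℕ,
      (1 / ((n : ℝ) + 1)) * ∑ k ∈ Finset.range (n + 1), chebP k ω ^ 2 =
        (1 + 2 * (n : ℝ)) / (2 * n + 2) +
          Real.sin ((2 * (n : ℝ) + 1) * θ) / ((2 * (n : ℝ) + 2) * Real.sin θ) := by
    intro n
    rw [hsum n]
    have hn : (0:ℝ) < (n:ℝ) + 1 := by positivity
    field_simp
    ring
  constructor
  · intro n; rw [hmain n, hsin]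
  · have heq : ∀ n : ℕ,
        (1 / ((n : ℝ) + 1)) * ∑ k ∈ Finset.range (n + 1), chebP k ω ^ 2 =
        1 + ((1 + 2 * (n : ℝ)) / (2 * n + 2) - 1 +
          Real.sin ((2 * (n : ℝ) + 1) * θ) / ((2 * (n : ℝ) + 2) * Real.sin θ)) := by
      intro n; rw [hmain n]; ring
    simp_rw [heq]
    have : Tendsto (fun n : ℕ => ((1 + 2 * (n : ℝ)) / (2 * n + 2) - 1 +
        Real.sin ((2 * (n : ℝ) + 1) * θ) / ((2 * (n : ℝ) + 2) * Real.sin θ)))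
        atTop (nhds 0) := by
      apply squeeze_zero_norm (a := fun n : ℕ => (1 + 1 / Real.sin θ) / (2 * n + 2))
      · intro n
        have hn : (0:ℝ) < 2 * (n:ℝ) + 2 := by positivity
        have e1 : (1 + 2 * (n : ℝ)) / (2 * n + 2) - 1 = -1 / (2 * n + 2) := by
          field_simp; ring
        rw [e1]
        have hb : |(-1:ℝ) / (2 * (n:ℝ) + 2) + Real.sin ((2 * (n : ℝ) + 1) * θ) /
            ((2 * (n : ℝ) + 2) * Real.sin θ)| ≤
            1 / (2 * (n:ℝ) + 2) + (1 / Real.sin θ) / (2 * (n:ℝ) + 2) := by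
          refine (abs_add_le _ _).trans (add_le_add ?_ ?_)
          · rw [abs_div]; simp [abs_of_pos hn]
          · rw [abs_div, abs_of_pos (show (0:ℝ) < (2 * (n : ℝ) + 2) * Real.sin θ by positivity)]
            calc |Real.sin ((2 * (n : ℝ) + 1) * θ)| / ((2 * (n : ℝ) + 2) * Real.sin θ)
                ≤ 1 / ((2 * (n : ℝ) + 2) * Real.sin θ) := by
                  gcongr
                  exact Real.abs_sin_le_one _
              _ = 1 / Real.sin θ / (2 * (n : ℝ) + 2) := by rw [div_div, mul_comm]
        calc _ ≤ _ := hb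
          _ = (1 + 1 / Real.sin θ) / (2 * (n:ℝ) + 2) := by ring
      · apply Tendsto.div_atTop tendsto_const_nhds
        apply tendsto_atTop_add_const_right
        exact (tendsto_natCast_atTop_atTop (R := ℝ)).const_mul_atTop (by norm_num)
    simpa using tendsto_const_nhds.add this
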